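/- Kuroda-type criterion in B(H): a unitarily invariant norm Φ (defined on finite-rank operators of B(H) with canonical trace Tr) satisfies lim_{Tr(e)→∞} Φ(e)/Tr(e) = 0 over finite-rank projections e if and only if Φ is not equivalent to the trace norm ‖·‖₁ on finite-rank operators. -/

import Mathlib

open ContinuousLinearMap
open scoped InnerProductSpace

noncomputable section

/-- An orthogonal projection on a Hilbert space. -/
def IsProjection {H : Type} [NormedAddCommGroup H] [InnerProductSpace ℂ H]
    [CompleteSpace H] (p : H →L[ℂ] H) : Prop :=
  IsSelfAdjoint p ∧ p * p = p

/-- A finite-rank bounded operator. -/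
def FiniteRankOp {H : Type} [NormedAddCommGroup H] [InnerProductSpace ℂ H]
    [CompleteSpace H] (x : H →L[ℂ] H) : Prop :=
  FiniteDimensional ℂ (LinearMap.range (x : H →ₗ[ℂ] H))

/-- The rank of a bounded operator. -/
def rankOp {H : Type} [NormedAddCommGroup H] [InnerProductSpace ℂ H]
    [CompleteSpace H] (x : H →L[ℂ] H) : ℕ :=
  Module.finrank ℂ (LinearMap.range (x : H →ₗ[ℂ] H))

/-- The absolute value `|z| = (z* z)^{1/2}` of a bounded operator. -/
def absOp {H : Type} [NormedAddCommGroup H] [InnerProductSpace ℂ H]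
    [CompleteSpace H] (z : H →L[ℂ] H) : H →L[ℂ] H :=
  CFC.sqrt (star z * z)

/-- The trace norm `‖z‖₁ = Tr |z|`, computed in a fixed orthonormal basis `ξ`. -/
def trNorm {H : Type} [NormedAddCommGroup H] [InnerProductSpace ℂ H]
    [CompleteSpace H] (ξ : HilbertBasis ℕ ℂ H) (z : H →L[ℂ] H) : ℝ :=
  ∑' i, (inner ℂ (ξ i) (absOp z (ξ i)) : ℂ).re


set_option linter.unusedSectionVars false
set_option maxHeartbeats 1000000

section Aux
variable {H : Type} [NormedAddCommGroup H] [InnerProductSpace ℂ H] [CompleteSpace H]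

section Aux
variable {H : Type} [NormedAddCommGroup H] [InnerProductSpace ℂ H] [CompleteSpace H]

/-- rank one operator `z ↦ ⟪a, z⟫ • b`. -/
def rk (b a : H) : H →L[ℂ] H := (innerSL ℂ a).smulRight b

@[simp] lemma rk_apply (b a z : H) : rk b a z = (inner ℂ a z : ℂ) • b := rfl

lemma FiniteRankOp.fd {x : H →L[ℂ] H} (h : FiniteRankOp x) :
    FiniteDimensional ℂ (LinearMap.range (x : H →ₗ[ℂ] H)) := h

lemma finiteRankOp_of_le {x : H →L[ℂ] H} {W : Submodule ℂ H} [FiniteDimensional ℂ W]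
    (h : LinearMap.range (x : H →ₗ[ℂ] H) ≤ W) : FiniteRankOp x :=
  Submodule.finiteDimensional_of_le h

lemma star_rk (b a : H) : star (rk b a) = rk a b := by
  rw [star_eq_adjoint]
  symm
  rw [eq_adjoint_iff]
  intro x y
  simp [inner_smul_left, inner_smul_right, mul_comm, ← inner_conj_symm a x]

lemma rk_comp (p q r s : H) : rk p q * rk r s = (inner ℂ q r : ℂ) • rk p s := by
  ext z; simp [smul_smul, mul_comm]

lemma comp_rk (A : H →L[ℂ] H) (b a : H) : A * rk b a = rk (A b) a := by
  ext z; simp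

lemma rk_comp_star (b a : H) (w : H →L[ℂ] H) : rk b a * star w = rk b (w a) := by
  ext z; simp [star_eq_adjoint, adjoint_inner_right]

lemma finiteRankOp_rk (b a : H) : FiniteRankOp (rk b a) := by
  refine finiteRankOp_of_le (W := Submodule.span ℂ {b}) ?_
  rintro z ⟨w, rfl⟩
  exact Submodule.smul_mem _ _ (Submodule.mem_span_singleton_self b)

lemma FiniteRankOp.add {x y : H →L[ℂ] H} (hx : FiniteRankOp x) (hy : FiniteRankOp y) :
    FiniteRankOp (x + y) := by
  haveI := hx.fd; haveI := hy.fd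
  refine finiteRankOp_of_le
    (W := LinearMap.range (x : H →ₗ[ℂ] H) ⊔ LinearMap.range (y : H →ₗ[ℂ] H)) ?_
  rintro z ⟨w, rfl⟩
  exact Submodule.mem_sup.2 ⟨x w, ⟨w, rfl⟩, y w, ⟨w, rfl⟩, rfl⟩

lemma FiniteRankOp.smul (c : ℂ) {x : H →L[ℂ] H} (hx : FiniteRankOp x) :
    FiniteRankOp (c • x) := by
  haveI := hx.fd
  refine finiteRankOp_of_le (W := LinearMap.range (x : H →ₗ[ℂ] H)) ?_
  rintro z ⟨w, rfl⟩
  exact ⟨c • w, by simp⟩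

lemma finiteRankOp_zero : FiniteRankOp (0 : H →L[ℂ] H) := by
  refine finiteRankOp_of_le (W := ⊥) ?_
  rintro z ⟨w, rfl⟩; simp

lemma FiniteRankOp.sum {ι : Type*} (s : Finset ι) (f : ι → (H →L[ℂ] H))
    (hf : ∀ i ∈ s, FiniteRankOp (f i)) : FiniteRankOp (∑ i ∈ s, f i) := by
  classical
  induction s using Finset.induction with
  | empty => simpa using finiteRankOp_zero
  | @insert a s hmem ih =>
    rw [Finset.sum_insert hmem]
    exact (hf _ (Finset.mem_insert_self _ _)).add (ih fun i hi => hf i (Finset.mem_insert_of_mem hi))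

lemma FiniteRankOp.mul_left (A : H →L[ℂ] H) {x : H →L[ℂ] H} (hx : FiniteRankOp x) :
    FiniteRankOp (A * x) := by
  haveI := hx.fd
  have h : LinearMap.range ((A * x : H →L[ℂ] H) : H →ₗ[ℂ] H) =
      Submodule.map (A : H →ₗ[ℂ] H) (LinearMap.range (x : H →ₗ[ℂ] H)) := by
    rw [← LinearMap.range_comp]; rfl
  exact finiteRankOp_of_le h.le

lemma FiniteRankOp.mul_right {x : H →L[ℂ] H} (hx : FiniteRankOp x) (A : H →L[ℂ] H) :
    FiniteRankOp (x * A) := by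
  haveI := hx.fd
  refine finiteRankOp_of_le (W := LinearMap.range (x : H →ₗ[ℂ] H)) ?_
  rintro z ⟨w, rfl⟩; exact ⟨A w, rfl⟩

-- orthonormal expansion within the span
lemma onb_rep {d : ℕ} {B : Fin d → H} (hB : Orthonormal ℂ B) {w : H}
    (hw : w ∈ Submodule.span ℂ (Set.range B)) :
    w = ∑ j, (inner ℂ (B j) w : ℂ) • B j := by
  obtain ⟨c, rfl⟩ := Submodule.mem_span_range_iff_exists_fun ℂ |>.1 hw
  congr 1
  ext j
  rw [hB.inner_right_fintype]

lemma parseval_span {d : ℕ} {B : Fin d → H} (hB : Orthonormal ℂ B) {w' : H} (w : H)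
    (hw' : w' ∈ Submodule.span ℂ (Set.range B)) :
    ∑ j, (inner ℂ w (B j) : ℂ) * (inner ℂ (B j) w' : ℂ) = inner ℂ w w' := by
  conv_rhs => rw [onb_rep hB hw']
  rw [inner_sum]
  simp [inner_smul_right, mul_comm]

lemma sum_rk_collapse {d : ℕ} (p : Fin d → H) {q : Fin d → H} (r : Fin d → H)
    (hq : Orthonormal ℂ q) :
    (∑ j, rk (p j) (q j)) * (∑ k, rk (q k) (r k)) = ∑ j, rk (p j) (r j) := by
  classical
  rw [Finset.sum_mul_sum]
  simp only [rk_comp, orthonormal_iff_ite.mp hq]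
  simp [ite_smul]

lemma sum_rk_fix {d : ℕ} {A : Fin d → H} (hA : Orthonormal ℂ A) {w : H}
    (hw : w ∈ Submodule.span ℂ (Set.range A)) :
    (∑ j, rk (A j) (A j)) w = w := by
  rw [ContinuousLinearMap.sum_apply]
  simp only [rk_apply]
  exact (onb_rep hA hw).symm

lemma star_sum_rk {d : ℕ} (p q : Fin d → H) :
    star (∑ j, rk (p j) (q j)) = ∑ j, rk (q j) (p j) := by
  rw [star_sum]
  simp [star_rk]

lemma rk_expand_left {d : ℕ} {A : Fin d → H} (hA : Orthonormal ℂ A) {b : H}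
    (hb : b ∈ Submodule.span ℂ (Set.range A)) (a : H) :
    rk b a = ∑ k, (inner ℂ (A k) b : ℂ) • rk (A k) a := by
  ext z
  conv_lhs => rw [rk_apply, onb_rep hA hb]
  rw [Finset.smul_sum]
  simp [smul_smul, mul_comm]

/-- Exchange two orthonormal families with the same span by a unitary. -/
lemma exchange_unitary {d : ℕ} {A B : Fin d → H} (hA : Orthonormal ℂ A) (hB : Orthonormal ℂ B)
    (hsp : Submodule.span ℂ (Set.range A) = Submodule.span ℂ (Set.range B)) :
    ∃ u : H →L[ℂ] H, u ∈ unitary (H →L[ℂ] H) ∧ ∀ i, u (A i) = B i := by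
  classical
  set V := Submodule.span ℂ (Set.range A) with hV
  have hBmem : ∀ j, B j ∈ V := fun j => hsp ▸ Submodule.subset_span ⟨j, rfl⟩
  have hAmem : ∀ j, A j ∈ V := fun j => Submodule.subset_span ⟨j, rfl⟩
  set RA : H →L[ℂ] H := ∑ j, rk (A j) (A j) with hRA
  set RB : H →L[ℂ] H := ∑ j, rk (B j) (A j) with hRB
  set RB' : H →L[ℂ] H := ∑ j, rk (A j) (B j) with hRB'
  set u : H →L[ℂ] H := 1 + RB - RA with hu
  have hstaru : star u = 1 + RB' - RA := by
    rw [hu, star_sub, star_add, star_one, hRB, hRB', hRA, star_sum_rk, star_sum_rk]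
  -- product identities
  have h1 : RB' * RB = RA := sum_rk_collapse _ _ hB
  have h2 : RA * RA = RA := sum_rk_collapse _ _ hA
  have h3 : RB' * RA = RB' := by
    rw [hRB', hRA, Finset.sum_mul]
    refine Finset.sum_congr rfl fun j _ => ?_
    have : star RA = RA := by rw [hRA, star_sum_rk]
    calc rk (A j) (B j) * RA = rk (A j) (B j) * star RA := by rw [this]
      _ = rk (A j) (RA (B j)) := rk_comp_star _ _ _
      _ = rk (A j) (B j) := by rw [hRA, sum_rk_fix hA (hBmem j)]
  have h4 : RA * RB = RB := by
    rw [hRA, hRB, Finset.mul_sum]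
    refine Finset.sum_congr rfl fun j _ => ?_
    rw [← hRA, comp_rk, hRA, sum_rk_fix hA (hBmem j)]
  have h5 : RB * RB' = ∑ j, rk (B j) (B j) := sum_rk_collapse _ _ hA
  have h6 : RB * RA = RB := sum_rk_collapse _ _ hA
  have h7 : RA * RB' = RB' := sum_rk_collapse _ _ hA
  have hSB : (∑ j, rk (B j) (B j)) = RA := by
    have expand : ∀ j, rk (B j) (B j) = ∑ k, (inner ℂ (A k) (B j) : ℂ) • rk (A k) (B j) :=
      fun j => rk_expand_left hA (hBmem j) _
    calc (∑ j, rk (B j) (B j)) = ∑ j, ∑ k, (inner ℂ (A k) (B j) : ℂ) • rk (A k) (B j) := by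
          simp_rw [← expand]
      _ = ∑ k, ∑ j, (inner ℂ (A k) (B j) : ℂ) • rk (A k) (B j) := Finset.sum_comm
      _ = ∑ k, rk (A k) (∑ j, (inner ℂ (B j) (A k) : ℂ) • B j) := by
          refine Finset.sum_congr rfl fun k _ => ?_
          ext z
          simp only [ContinuousLinearMap.coe_sum', Finset.sum_apply,
            ContinuousLinearMap.coe_smul', Pi.smul_apply, rk_apply, sum_inner,
            inner_smul_left, starRingEnd_apply, star_mul', star_star]
          rw [Finset.sum_smul]
          congr 1; ext j
          rw [smul_smul, ← inner_conj_symm (A k) (B j), starRingEnd_apply]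
      _ = ∑ k, rk (A k) (A k) := by
          refine Finset.sum_congr rfl fun k _ => ?_
          rw [← onb_rep hB (hsp ▸ hAmem k)]
      _ = RA := hRA.symm
  refine ⟨u, ?_, ?_⟩
  · constructor
    · -- star u * u = 1
      rw [hstaru, hu]
      have expand : (1 + RB' - RA) * (1 + RB - RA)
          = 1 + RB - RA + (RB' + RB' * RB - RB' * RA) - (RA + RA * RB - RA * RA) := by
        noncomm_ring
      rw [expand, h1, h2, h3, h4]; abel
    · rw [hstaru, hu]
      have expand : (1 + RB - RA) * (1 + RB' - RA)
          = 1 + RB' - RA + (RB + RB * RB' - RB * RA) - (RA + RA * RB' - RA * RA) := by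
        noncomm_ring
      rw [expand, h2, h5, h6, h7, hSB]; abel
  · intro i
    rw [hu]
    have hRAA : RA (A i) = A i := sum_rk_fix hA (hAmem i)
    have hRBA : RB (A i) = B i := by
      rw [hRB, ContinuousLinearMap.sum_apply]
      simp only [rk_apply]
      simp [orthonormal_iff_ite.mp hA]
    simp [hRBA, hRAA]

/-- There is a unitary mapping any orthonormal family to any other (same finite index). -/
lemma unitary_map {n : ℕ} {a b : Fin n → H} (ha : Orthonormal ℂ a) (hb : Orthonormal ℂ b) :
    ∃ u : H →L[ℂ] H, u ∈ unitary (H →L[ℂ] H) ∧ ∀ i, u (a i) = b i := by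
  classical
  set V : Submodule ℂ H := Submodule.span ℂ (Set.range a) ⊔ Submodule.span ℂ (Set.range b)
    with hVdef
  haveI : FiniteDimensional ℂ (Submodule.span ℂ (Set.range a)) :=
    FiniteDimensional.span_of_finite ℂ (Set.finite_range a)
  haveI : FiniteDimensional ℂ (Submodule.span ℂ (Set.range b)) :=
    FiniteDimensional.span_of_finite ℂ (Set.finite_range b)
  haveI : FiniteDimensional ℂ V := Submodule.finiteDimensional_sup _ _
  set d : ℕ := Module.finrank ℂ V with hd
  have hamem : ∀ i, a i ∈ V := fun i =>
    Submodule.mem_sup_left (Submodule.subset_span ⟨i, rfl⟩)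
  have hbmem : ∀ i, b i ∈ V := fun i =>
    Submodule.mem_sup_right (Submodule.subset_span ⟨i, rfl⟩)
  set aV : Fin n → V := fun i => ⟨a i, hamem i⟩ with haV
  set bV : Fin n → V := fun i => ⟨b i, hbmem i⟩ with hbV
  have haVon : Orthonormal ℂ aV := by
    rw [orthonormal_iff_ite] at ha ⊢
    intro i j; rw [Submodule.coe_inner]; exact ha i j
  have hbVon : Orthonormal ℂ bV := by
    rw [orthonormal_iff_ite] at hb ⊢
    intro i j; rw [Submodule.coe_inner]; exact hb i j
  have hnd : n ≤ d := by
    simpa using haVon.linearIndependent.fintype_card_le_finrank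
  -- extend to orthonormal bases of V
  have hext : ∀ (c : Fin n → V), Orthonormal ℂ c →
      ∃ B : OrthonormalBasis (Fin d) ℂ V, ∀ i : Fin n, B ⟨i.1, lt_of_lt_of_le i.2 hnd⟩ = c i := by
    intro c hc
    set v : Fin d → V := fun i => if h : (i : ℕ) < n then c ⟨i, h⟩ else 0 with hv
    set s : Set (Fin d) := {i : Fin d | (i : ℕ) < n} with hs
    have hres : Orthonormal ℂ (s.restrict v) := by
      have : s.restrict v = c ∘ (fun i : s => (⟨i.1, i.2⟩ : Fin n)) := by
        funext i
        simp only [Set.restrict_apply, hv, Function.comp]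
        exact dif_pos i.2
      rw [this]
      refine hc.comp _ (fun i j hij => ?_)
      apply Subtype.ext
      apply Fin.ext
      have h2 := congrArg Fin.val hij
      exact h2
    obtain ⟨B, hB⟩ := hres.exists_orthonormalBasis_extension_of_card_eq (by simp [hd])
    refine ⟨B, fun i => ?_⟩
    have hmem : (⟨i.1, lt_of_lt_of_le i.2 hnd⟩ : Fin d) ∈ s := i.2
    rw [hB _ hmem, hv]
    simp
  obtain ⟨A, hA⟩ := hext aV haVon
  obtain ⟨B, hB⟩ := hext bV hbVon
  have hspan : ∀ C : OrthonormalBasis (Fin d) ℂ V,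
      Submodule.span ℂ (Set.range (((↑) : V → H) ∘ C)) = V := by
    intro C
    rw [Set.range_comp, ← Submodule.coe_subtype, ← Submodule.map_span]
    rw [← C.coe_toBasis, C.toBasis.span_eq]
    exact Submodule.map_subtype_top V
  have hAon : Orthonormal ℂ (((↑) : V → H) ∘ A) := by
    rw [orthonormal_iff_ite]
    have := orthonormal_iff_ite.mp A.orthonormal
    intro i j; exact this i j
  have hBon : Orthonormal ℂ (((↑) : V → H) ∘ B) := by
    rw [orthonormal_iff_ite]
    have := orthonormal_iff_ite.mp B.orthonormal
    intro i j; exact this i j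
  obtain ⟨u, hu, huAB⟩ := exchange_unitary hAon hBon ((hspan A).trans (hspan B).symm)
  refine ⟨u, hu, fun i => ?_⟩
  have := huAB ⟨i.1, lt_of_lt_of_le i.2 hnd⟩
  simpa [Function.comp, hA i, hB i] using this


end Aux
section Proj
variable {H : Type} [NormedAddCommGroup H] [InnerProductSpace ℂ H] [CompleteSpace H]
variable (ξ : HilbertBasis ℕ ℂ H)

/-- projection onto the span of `ξ i`, `i ∈ s`. -/
def pfin (s : Finset ℕ) : H →L[ℂ] H := ∑ i ∈ s, rk (ξ i) (ξ i)

lemma inner_xi (i j : ℕ) : (inner ℂ (ξ i) (ξ j) : ℂ) = if i = j then 1 else 0 :=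
  orthonormal_iff_ite.mp ξ.orthonormal i j

lemma star_pfin (s : Finset ℕ) : star (pfin ξ s) = pfin ξ s := by
  rw [pfin, star_sum]
  simp [star_rk]

lemma pfin_mul (s t : Finset ℕ) : pfin ξ s * pfin ξ t = pfin ξ (s ∩ t) := by
  classical
  rw [pfin, pfin, Finset.sum_mul_sum]
  simp only [rk_comp, inner_xi, ite_smul, one_smul, zero_smul]
  rw [pfin, ← Finset.sum_ite_mem s t]
  congr 1; ext i
  rw [Finset.sum_ite_eq]

lemma finiteRankOp_pfin (s : Finset ℕ) : FiniteRankOp (pfin ξ s) :=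
  FiniteRankOp.sum _ _ fun i _ => finiteRankOp_rk _ _

lemma isProjection_pfin (s : Finset ℕ) : IsProjection (pfin ξ s) :=
  ⟨star_pfin ξ s, by rw [pfin_mul, Finset.inter_self]⟩

lemma pfin_apply_mem (s : Finset ℕ) {i : ℕ} (hi : i ∈ s) : pfin ξ s (ξ i) = ξ i := by
  classical
  rw [pfin, ContinuousLinearMap.sum_apply]
  simp only [rk_apply, inner_xi, ite_smul, one_smul, zero_smul]
  rw [Finset.sum_ite_eq' s i (fun j => ξ j), if_pos hi]

lemma range_pfin (s : Finset ℕ) :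
    LinearMap.range ((pfin ξ s : H →L[ℂ] H) : H →ₗ[ℂ] H)
      = Submodule.span ℂ (Set.range (fun i : ↥s => ξ (i : ℕ))) := by
  classical
  apply le_antisymm
  · rintro z ⟨w, rfl⟩
    have : (pfin ξ s) w = ∑ i ∈ s, (inner ℂ (ξ i) w : ℂ) • ξ i := by
      rw [pfin, ContinuousLinearMap.sum_apply]; simp
    rw [ContinuousLinearMap.coe_coe, this]
    apply Submodule.sum_mem
    intro i hi
    exact Submodule.smul_mem _ _ (Submodule.subset_span ⟨⟨i, hi⟩, rfl⟩)
  · rw [Submodule.span_le]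
    rintro z ⟨⟨i, hi⟩, rfl⟩
    exact ⟨ξ i, pfin_apply_mem ξ s hi⟩

lemma rankOp_pfin (s : Finset ℕ) : rankOp (pfin ξ s) = s.card := by
  rw [rankOp, range_pfin]
  have hon : Orthonormal ℂ (fun i : ↥s => ξ (i : ℕ)) :=
    ξ.orthonormal.comp _ Subtype.val_injective
  rw [finrank_span_eq_card hon.linearIndependent]
  simp

end Proj
section Phi
variable {H : Type} [NormedAddCommGroup H] [InnerProductSpace ℂ H] [CompleteSpace H]
variable (ξ : HilbertBasis ℕ ℂ H) (Φ : (H →L[ℂ] H) → ℝ)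

lemma phi_zero (hsmul : ∀ (c : ℂ) x, FiniteRankOp x → Φ (c • x) = ‖c‖ * Φ x) :
    Φ (0 : H →L[ℂ] H) = 0 := by
  have := hsmul 0 0 finiteRankOp_zero
  simpa using this

lemma phi_sum_le (hΦ0 : Φ (0 : H →L[ℂ] H) = 0)
    (hadd : ∀ x y, FiniteRankOp x → FiniteRankOp y → Φ (x + y) ≤ Φ x + Φ y)
    {ι : Type*} (s : Finset ι) (f : ι → (H →L[ℂ] H)) (hf : ∀ i ∈ s, FiniteRankOp (f i)) :
    Φ (∑ i ∈ s, f i) ≤ ∑ i ∈ s, Φ (f i) := by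
  classical
  induction s using Finset.induction with
  | empty => simp [hΦ0]
  | @insert a s hmem ih =>
    rw [Finset.sum_insert hmem, Finset.sum_insert hmem]
    calc Φ (f a + ∑ i ∈ s, f i)
        ≤ Φ (f a) + Φ (∑ i ∈ s, f i) :=
          hadd _ _ (hf _ (Finset.mem_insert_self _ _))
            (FiniteRankOp.sum _ _ fun i hi => hf i (Finset.mem_insert_of_mem hi))
      _ ≤ Φ (f a) + ∑ i ∈ s, Φ (f i) := by
          have := ih fun i hi => hf i (Finset.mem_insert_of_mem hi)
          linarith

lemma orthonormal_xifam (n : ℕ) : Orthonormal ℂ (fun i : Fin n => ξ (i : ℕ)) :=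
  ξ.orthonormal.comp _ Fin.val_injective

lemma pfin_range_eq_sum_fin (n : ℕ) :
    pfin ξ (Finset.range n) = ∑ i : Fin n, rk (ξ (i : ℕ)) (ξ (i : ℕ)) := by
  rw [pfin, ← Fin.sum_univ_eq_sum_range]

lemma phi_rep
    (hunitary : ∀ u v x, u ∈ unitary (H →L[ℂ] H) → v ∈ unitary (H →L[ℂ] H) →
      FiniteRankOp x → Φ (u * x * v) = Φ x)
    {n : ℕ} {a b : Fin n → H} (ha : Orthonormal ℂ a) (hb : Orthonormal ℂ b) :
    Φ (∑ i, rk (b i) (a i)) = Φ (pfin ξ (Finset.range n)) := by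
  obtain ⟨u, hu, hub⟩ := unitary_map (orthonormal_xifam ξ n) hb
  obtain ⟨w, hw, hwa⟩ := unitary_map (orthonormal_xifam ξ n) ha
  have key : u * pfin ξ (Finset.range n) * star w = ∑ i, rk (b i) (a i) := by
    rw [pfin_range_eq_sum_fin, Finset.mul_sum, Finset.sum_mul]
    refine Finset.sum_congr rfl fun i _ => ?_
    rw [comp_rk, rk_comp_star, hub i, hwa i]
  rw [← key]
  exact hunitary u (star w) _ hu (Unitary.star_mem hw) (finiteRankOp_pfin ξ _)

lemma phi_pfin
    (hunitary : ∀ u v x, u ∈ unitary (H →L[ℂ] H) → v ∈ unitary (H →L[ℂ] H) →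
      FiniteRankOp x → Φ (u * x * v) = Φ x)
    (s : Finset ℕ) : Φ (pfin ξ s) = Φ (pfin ξ (Finset.range s.card)) := by
  classical
  set e := s.orderIsoOfFin rfl with he
  have hon : Orthonormal ℂ (fun i : Fin s.card => ξ ((e i : ℕ))) :=
    ξ.orthonormal.comp _ (fun i j hij => e.injective (Subtype.ext hij))
  have hsum : pfin ξ s = ∑ i : Fin s.card, rk (ξ ((e i : ℕ))) (ξ ((e i : ℕ))) := by
    rw [pfin]
    rw [← Finset.sum_attach s (fun i => rk (ξ i) (ξ i)), ← Finset.univ_eq_attach]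
    exact (Equiv.sum_comp e.toEquiv (fun i => rk (ξ (i : ℕ)) (ξ (i : ℕ)))).symm
  rw [hsum, phi_rep ξ Φ hunitary hon hon]

lemma proj_rep {e : H →L[ℂ] H} (he : IsProjection e) (hfr : FiniteRankOp e) :
    ∃ b : Fin (rankOp e) → H, Orthonormal ℂ b ∧ e = ∑ i, rk (b i) (b i) := by
  haveI : FiniteDimensional ℂ (LinearMap.range ((e : H →L[ℂ] H) : H →ₗ[ℂ] H)) := hfr
  set K := LinearMap.range ((e : H →L[ℂ] H) : H →ₗ[ℂ] H) with hK
  set B := stdOrthonormalBasis ℂ K with hB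
  have hrank : rankOp e = Module.finrank ℂ K := rfl
  set b : Fin (rankOp e) → H := fun i => (B i : H) with hb
  have hbK : ∀ i, b i ∈ K := fun i => (B (i : Fin (Module.finrank ℂ K))).2
  have hbon : Orthonormal ℂ b := by
    rw [orthonormal_iff_ite]
    intro i j
    have := orthonormal_iff_ite.mp B.orthonormal i j
    rw [hb, ← Submodule.coe_inner, this]
    congr 1
  have heb : ∀ i, e (b i) = b i := by
    intro i
    obtain ⟨w, hw⟩ := hbK i
    have h2 : e (e w) = e w := by rw [← ContinuousLinearMap.mul_apply, he.2]
    rw [← hw]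
    exact h2
  refine ⟨b, hbon, ?_⟩
  ext v
  have hev : e v ∈ K := ⟨v, rfl⟩
  have hrepr : (⟨e v, hev⟩ : K) = ∑ j, (inner ℂ (B j) (⟨e v, hev⟩ : K) : ℂ) • B j :=
    (B.sum_repr' _).symm
  have hcoe : e v = ∑ i, (inner ℂ (b i) (e v) : ℂ) • b i := by
    have := congrArg (Subtype.val) hrepr
    push_cast at this
    exact this
  have hadj : ∀ i, (inner ℂ (b i) (e v) : ℂ) = inner ℂ (b i) v := by
    intro i
    rw [← ContinuousLinearMap.adjoint_inner_left e v (b i), ← star_eq_adjoint, he.1.star_eq,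
      heb i]
  rw [ContinuousLinearMap.sum_apply]
  simp only [rk_apply]
  rw [hcoe]
  exact Finset.sum_congr rfl fun i _ => by rw [hadj i]

end Phi
section Phi2
variable {H : Type} [NormedAddCommGroup H] [InnerProductSpace ℂ H] [CompleteSpace H]
variable (ξ : HilbertBasis ℕ ℂ H) (Φ : (H →L[ℂ] H) → ℝ)

lemma phi_pxp_le
    (hadd : ∀ x y, FiniteRankOp x → FiniteRankOp y → Φ (x + y) ≤ Φ x + Φ y)
    (hsmul : ∀ (c : ℂ) x, FiniteRankOp x → Φ (c • x) = ‖c‖ * Φ x)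
    (hunitary : ∀ u v x, u ∈ unitary (H →L[ℂ] H) → v ∈ unitary (H →L[ℂ] H) →
      FiniteRankOp x → Φ (u * x * v) = Φ x)
    {p x : H →L[ℂ] H} (hp : IsProjection p) (hx : FiniteRankOp x) :
    Φ (p * x * p) ≤ Φ x := by
  set u : H →L[ℂ] H := p + p - 1 with hu
  have hu2 : u * u = 1 := by
    have expand : (p + p - 1) * (p + p - 1)
        = (p * p) + (p * p) + (p * p) + (p * p) - p - p - p - p + 1 := by noncomm_ring
    rw [hu, expand, hp.2]; abel
  have hustar : star u = u := by
    rw [hu, star_sub, star_add, star_one, hp.1.star_eq]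
  have humem : u ∈ unitary (H →L[ℂ] H) := by
    constructor <;> rw [hustar] <;> exact hu2
  have honemem : (1 : H →L[ℂ] H) ∈ unitary (H →L[ℂ] H) := one_mem _
  have hkey : x + u * x + x * u + u * x * u = p*x*p + p*x*p + p*x*p + p*x*p := by
    have h1 : x + u * x + x * u + u * x * u = (1 + u) * x * (1 + u) := by noncomm_ring
    have h2 : (1 + u) = p + p := by rw [hu]; abel
    have h3 : (p + p) * x * (p + p) = p*x*p + p*x*p + p*x*p + p*x*p := by noncomm_ring
    rw [h1, h2, h3]
  -- finite rank facts
  have hux : FiniteRankOp (u * x) := hx.mul_left u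
  have hxu : FiniteRankOp (x * u) := hx.mul_right u
  have huxu : FiniteRankOp (u * x * u) := (hx.mul_left u).mul_right u
  have hpxp : FiniteRankOp (p * x * p) := (hx.mul_left p).mul_right p
  -- Φ of the four unitary conjugates
  have hΦux : Φ (u * x) = Φ x := by
    have := hunitary u 1 x humem honemem hx
    simpa using this
  have hΦxu : Φ (x * u) = Φ x := by
    have := hunitary 1 u x honemem humem hx
    simpa using this
  have hΦuxu : Φ (u * x * u) = Φ x := hunitary u u x humem humem hx
  have hsum : Φ (x + u * x + x * u + u * x * u) ≤ Φ x + Φ x + Φ x + Φ x := by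
    calc Φ (x + u * x + x * u + u * x * u)
        ≤ Φ (x + u * x + x * u) + Φ (u * x * u) :=
          hadd _ _ ((hx.add hux).add hxu) huxu
      _ ≤ Φ (x + u * x) + Φ (x * u) + Φ (u * x * u) := by
          have := hadd _ _ (hx.add hux) hxu
          linarith
      _ ≤ Φ x + Φ (u * x) + Φ (x * u) + Φ (u * x * u) := by
          have := hadd _ _ hx hux
          linarith
      _ = Φ x + Φ x + Φ x + Φ x := by rw [hΦux, hΦxu, hΦuxu]
  have hfour : Φ (p*x*p + p*x*p + p*x*p + p*x*p) = 4 * Φ (p * x * p) := by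
    have h4 : p*x*p + p*x*p + p*x*p + p*x*p = ((4:ℂ)) • (p*x*p) := by
      rw [show (4:ℂ) = 1+1+1+1 by norm_num]
      simp [add_smul]
    rw [h4, hsmul 4 _ hpxp]
    norm_num
  rw [hkey, hfour] at hsum
  linarith

lemma phi_mono
    (hadd : ∀ x y, FiniteRankOp x → FiniteRankOp y → Φ (x + y) ≤ Φ x + Φ y)
    (hsmul : ∀ (c : ℂ) x, FiniteRankOp x → Φ (c • x) = ‖c‖ * Φ x)
    (hunitary : ∀ u v x, u ∈ unitary (H →L[ℂ] H) → v ∈ unitary (H →L[ℂ] H) →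
      FiniteRankOp x → Φ (u * x * v) = Φ x)
    {n m : ℕ} (hnm : n ≤ m) :
    Φ (pfin ξ (Finset.range n)) ≤ Φ (pfin ξ (Finset.range m)) := by
  have hsub : Finset.range n ∩ Finset.range m = Finset.range n :=
    Finset.inter_eq_left.mpr (Finset.range_subset_range.2 hnm)
  have hkey : pfin ξ (Finset.range n) * pfin ξ (Finset.range m) * pfin ξ (Finset.range n)
      = pfin ξ (Finset.range n) := by
    rw [pfin_mul, hsub, pfin_mul, Finset.inter_self]
  calc Φ (pfin ξ (Finset.range n))
      = Φ (pfin ξ (Finset.range n) * pfin ξ (Finset.range m) * pfin ξ (Finset.range n)) := by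
        rw [hkey]
    _ ≤ Φ (pfin ξ (Finset.range m)) :=
        phi_pxp_le Φ hadd hsmul hunitary (isProjection_pfin ξ _) (finiteRankOp_pfin ξ _)

lemma phi_range_add
    (hadd : ∀ x y, FiniteRankOp x → FiniteRankOp y → Φ (x + y) ≤ Φ x + Φ y)
    (hunitary : ∀ u v x, u ∈ unitary (H →L[ℂ] H) → v ∈ unitary (H →L[ℂ] H) →
      FiniteRankOp x → Φ (u * x * v) = Φ x)
    (k n : ℕ) :
    Φ (pfin ξ (Finset.range (k + n)))
      ≤ Φ (pfin ξ (Finset.range k)) + Φ (pfin ξ (Finset.range n)) := by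
  have hsplit : pfin ξ (Finset.range (k + n))
      = pfin ξ (Finset.range k) + pfin ξ (Finset.Ico k (k + n)) := by
    rw [pfin, pfin, pfin, ← Finset.sum_union ?hd]
    · congr 1
      rw [Finset.range_eq_Ico, Finset.range_eq_Ico]
      exact (Finset.Ico_union_Ico_eq_Ico (Nat.zero_le k) (Nat.le_add_right k n)).symm
    case hd =>
      rw [Finset.range_eq_Ico]
      exact Finset.Ico_disjoint_Ico_consecutive 0 k (k + n)
  have hIco : Φ (pfin ξ (Finset.Ico k (k + n))) = Φ (pfin ξ (Finset.range n)) := by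
    have := phi_pfin ξ Φ hunitary (Finset.Ico k (k + n))
    rwa [Nat.card_Ico, Nat.add_sub_cancel_left] at this
  rw [hsplit]
  calc Φ (pfin ξ (Finset.range k) + pfin ξ (Finset.Ico k (k + n)))
      ≤ Φ (pfin ξ (Finset.range k)) + Φ (pfin ξ (Finset.Ico k (k + n))) :=
        hadd _ _ (finiteRankOp_pfin ξ _) (finiteRankOp_pfin ξ _)
    _ = _ := by rw [hIco]

lemma phi_one_pos
    (hnonneg : ∀ x, 0 ≤ Φ x)
    (hzero : ∀ x, FiniteRankOp x → Φ x = 0 → x = 0) :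
    0 < Φ (pfin ξ (Finset.range 1)) := by
  rcases lt_or_eq_of_le (hnonneg (pfin ξ (Finset.range 1))) with h | h
  · exact h
  · exfalso
    have hz := hzero _ (finiteRankOp_pfin ξ _) h.symm
    have happ : pfin ξ (Finset.range 1) (ξ 0) = ξ 0 :=
      pfin_apply_mem ξ _ (by simp)
    have hne : ξ 0 ≠ 0 := by
      intro hcontra
      have h1 := ξ.orthonormal.1 0
      rw [hcontra] at h1
      simp at h1
    rw [hz, ContinuousLinearMap.zero_apply] at happ
    exact hne happ.symm

/-- Kuroda's arithmetic: if a monotone subadditive `φ` with `φ 0 = 0` exceeds `ε·m`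
for arbitrarily large `m`, then `φ n ≥ (ε/2)·n` for all `n ≥ 1`. -/
lemma kuroda_arith (φ : ℕ → ℝ) (ε : ℝ) (hε : 0 < ε)
    (hmono : ∀ {n m : ℕ}, n ≤ m → φ n ≤ φ m)
    (h0 : φ 0 = 0)
    (hsub : ∀ k n, φ (k + n) ≤ φ k + φ n)
    (hbig : ∀ N : ℕ, ∃ m : ℕ, N ≤ m ∧ ε * m ≤ φ m)
    {n : ℕ} (hn : 1 ≤ n) : (ε / 2) * n ≤ φ n := by
  obtain ⟨m, hm, hφm⟩ := hbig n
  set q := m / n with hq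
  set r := m % n with hr
  have hdiv : m = n * q + r := (Nat.div_add_mod m n).symm
  have hrn : r < n := Nat.mod_lt _ hn
  have hiter : ∀ j : ℕ, φ (n * j) ≤ j * φ n := by
    intro j
    induction j with
    | zero => simp [h0]
    | succ j ih =>
      have : φ (n * (j + 1)) ≤ φ (n * j) + φ n := by
        rw [Nat.mul_succ]
        exact hsub _ _
      push_cast
      push_cast at ih
      linarith
  have hφm2 : φ m ≤ (q + 1 : ℝ) * φ n := by
    have h1 : φ m ≤ φ (n * q) + φ r := by rw [hdiv]; exact hsub _ _
    have h2 : φ r ≤ φ n := hmono hrn.le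
    have h3 := hiter q
    push_cast at h3 ⊢
    linarith
  have hφn0 : 0 ≤ φ n := h0 ▸ hmono (Nat.zero_le n)
  have hqn : ((q : ℝ) + 1) * n ≤ 2 * m := by
    have h1 : n * q ≤ m := by omega
    have h2 : n ≤ m := hm
    push_cast
    have h1' : (n : ℝ) * q ≤ m := by exact_mod_cast h1
    have h2' : (n : ℝ) ≤ m := by exact_mod_cast h2
    nlinarith
  have hq1 : (0 : ℝ) < q + 1 := by positivity
  -- (ε/2) * n * (q+1) ≤ ε * m ≤ φ m * ... ≤ (q+1) φ n
  have hchain : (ε / 2) * n * (q + 1) ≤ (q + 1) * φ n := by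
    have : (ε / 2) * ((q + 1 : ℝ) * n) ≤ (ε / 2) * (2 * m) := by
      apply mul_le_mul_of_nonneg_left hqn (by positivity)
    calc (ε / 2) * n * (q + 1) = (ε / 2) * ((q + 1 : ℝ) * n) := by ring
      _ ≤ (ε / 2) * (2 * m) := this
      _ = ε * m := by ring
      _ ≤ φ m := hφm
      _ ≤ (q + 1 : ℝ) * φ n := hφm2
  have := le_of_mul_le_mul_right (by linarith [hchain] : (ε / 2) * n * (q + 1) ≤ φ n * (q + 1)) hq1
  linarith [this]

end Phi2
section SVD
variable {H : Type} [NormedAddCommGroup H] [InnerProductSpace ℂ H] [CompleteSpace H]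

lemma inner_map_map (x : H →L[ℂ] H) (u v : H) :
    (inner ℂ (x u) (x v) : ℂ) = inner ℂ u ((star x * x) v) := by
  rw [ContinuousLinearMap.mul_apply, star_eq_adjoint, ContinuousLinearMap.adjoint_inner_right]

/-- Singular value decomposition of a finite-rank operator. -/
lemma svd {x : H →L[ℂ] H} (hx : FiniteRankOp x) :
    ∃ (n : ℕ) (s : Fin n → ℝ) (a b : Fin n → H), Orthonormal ℂ a ∧ Orthonormal ℂ b ∧
      (∀ i, 0 < s i) ∧ x = ∑ i, (s i : ℂ) • rk (b i) (a i) := by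
  classical
  haveI hxfd : FiniteDimensional ℂ (LinearMap.range ((x : H →L[ℂ] H) : H →ₗ[ℂ] H)) := hx
  set T : H →L[ℂ] H := star x * x with hT
  have hTsym : (T : H →ₗ[ℂ] H).IsSymmetric := (IsSelfAdjoint.star_mul_self x).isSymmetric
  set W : Submodule ℂ H := LinearMap.range ((T : H →L[ℂ] H) : H →ₗ[ℂ] H) with hW
  haveI hWfd : FiniteDimensional ℂ W := by
    have hle : W ≤ Submodule.map ((star x : H →L[ℂ] H) : H →ₗ[ℂ] H)
        (LinearMap.range ((x : H →L[ℂ] H) : H →ₗ[ℂ] H)) := by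
      rintro z ⟨w, rfl⟩
      exact ⟨x w, ⟨w, rfl⟩, rfl⟩
    exact Submodule.finiteDimensional_of_le hle
  have hTW : ∀ v ∈ W, T v ∈ W := fun v _ => ⟨v, rfl⟩
  set T' : W →ₗ[ℂ] W := ((T : H →L[ℂ] H) : H →ₗ[ℂ] H).restrict hTW with hT'
  have hT'sym : T'.IsSymmetric := by
    intro u v
    have h1 : ((T' u : W) : H) = T u := rfl
    have h2 : ((T' v : W) : H) = T v := rfl
    rw [Submodule.coe_inner, Submodule.coe_inner, h1, h2]
    exact hTsym u v
  set d : ℕ := Module.finrank ℂ W with hd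
  set E : OrthonormalBasis (Fin d) ℂ W := hT'sym.eigenvectorBasis rfl with hE
  set μ : Fin d → ℝ := hT'sym.eigenvalues rfl with hμ
  have hTe : ∀ j, T ((E j : W) : H) = (μ j : ℂ) • ((E j : W) : H) := by
    intro j
    have := hT'sym.apply_eigenvectorBasis rfl j
    have hco := congrArg (Subtype.val) this
    push_cast at hco
    exact hco
  have hEon : Orthonormal ℂ (fun j : Fin d => ((E j : W) : H)) := by
    rw [orthonormal_iff_ite]
    intro i j
    rw [← Submodule.coe_inner]
    exact orthonormal_iff_ite.mp E.orthonormal i j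
  have hcross : ∀ i j : Fin d, (inner ℂ (x ((E i : W) : H)) (x ((E j : W) : H)) : ℂ)
      = if i = j then (μ j : ℂ) else 0 := by
    intro i j
    rw [inner_map_map, ← hT, hTe j, inner_smul_right, orthonormal_iff_ite.mp hEon i j]
    by_cases h : i = j <;> simp [h]
  have hnormsq : ∀ j : Fin d, (‖x ((E j : W) : H)‖ : ℝ)^2 = μ j := by
    intro j
    have := hcross j j
    rw [if_pos rfl] at this
    have h2 : (inner ℂ (x ((E j : W) : H)) (x ((E j : W) : H)) : ℂ) = (‖x ((E j : W) : H)‖ : ℂ)^2 :=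
      inner_self_eq_norm_sq_to_K _
    rw [h2] at this
    exact_mod_cast this
  -- x vanishes orthogonally to the eigenvectors
  have hxv : ∀ v : H, x v = ∑ j : Fin d, (inner ℂ ((E j : W) : H) v : ℂ) • x ((E j : W) : H) := by
    intro v
    set Pv : H := ∑ j : Fin d, (inner ℂ ((E j : W) : H) v : ℂ) • ((E j : W) : H) with hPv
    have hperp : ∀ j, (inner ℂ ((E j : W) : H) (v - Pv) : ℂ) = 0 := by
      intro j
      rw [inner_sub_right, hPv, inner_sum]
      simp only [inner_smul_right, orthonormal_iff_ite.mp hEon]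
      simp
    have hWperp : ∀ w ∈ W, (inner ℂ (v - Pv) w : ℂ) = 0 := by
      intro w hw
      have hspan : Submodule.span ℂ (Set.range (fun j : Fin d => ((E j : W) : H))) = W := by
        have : (fun j : Fin d => ((E j : W) : H)) = (W.subtype : W → H) ∘ E := rfl
        rw [this, Set.range_comp, ← Submodule.map_span, ← E.coe_toBasis, E.toBasis.span_eq]
        exact Submodule.map_subtype_top W
      rw [← hspan] at hw
      rw [onb_rep hEon hw, inner_sum]
      simp only [inner_smul_right]
      have : ∀ j, (inner ℂ (v - Pv) ((E j : W) : H) : ℂ) = 0 := by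
        intro j
        rw [← inner_conj_symm, hperp j, map_zero]
      simp [this]
    have hzero : x (v - Pv) = 0 := by
      have h1 : (inner ℂ (x (v - Pv)) (x (v - Pv)) : ℂ) = 0 := by
        rw [inner_map_map]
        exact hWperp _ ⟨v - Pv, rfl⟩
      rwa [inner_self_eq_zero] at h1
    have : x v = x Pv := by
      have h := map_sub x v Pv
      rw [hzero] at h
      exact sub_eq_zero.mp h.symm
    rw [this, hPv, map_sum]
    simp [map_smul]
  set J : Finset (Fin d) := Finset.univ.filter (fun j => x ((E j : W) : H) ≠ 0) with hJ
  set n : ℕ := J.card with hn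
  set g := J.orderIsoOfFin rfl with hg
  set a : Fin n → H := fun i => ((E (g i : Fin d) : W) : H) with ha
  set sv : Fin n → ℝ := fun i => ‖x ((E (g i : Fin d) : W) : H)‖ with hsv
  have hsvpos : ∀ i, 0 < sv i := by
    intro i
    exact norm_pos_iff.mpr (Finset.mem_filter.mp (g i).2).2
  set b : Fin n → H := fun i => ((sv i : ℂ))⁻¹ • x ((E (g i : Fin d) : W) : H) with hb
  have haon : Orthonormal ℂ a :=
    hEon.comp (fun i => (g i : Fin d)) (fun i j hij => g.injective (Subtype.ext hij))
  have hbon : Orthonormal ℂ b := by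
    rw [orthonormal_iff_ite]
    intro i j
    rw [hb]
    simp only [inner_smul_left, inner_smul_right]
    rw [hcross]
    have hgij : ((g i : Fin d) = (g j : Fin d)) ↔ i = j := by
      constructor
      · intro h; exact g.injective (Subtype.ext h)
      · intro h; rw [h]
    by_cases h : i = j
    · subst h
      rw [if_pos rfl, if_pos rfl]
      have h1 : ((sv i : ℂ))⁻¹ ≠ 0 := by
        simp only [ne_eq, inv_eq_zero, Complex.ofReal_eq_zero]
        exact (hsvpos i).ne'
      have h2 := hnormsq (g i : Fin d)
      rw [map_inv₀, Complex.conj_ofReal]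
      rw [show (μ (g i : Fin d) : ℂ) = ((sv i : ℂ))^2 by
        rw [hsv]; exact_mod_cast congrArg (fun t : ℝ => (t : ℂ)) h2.symm]
      have h1' : ((sv i : ℝ) : ℂ) ≠ 0 := by
        simpa using (hsvpos i).ne'
      field_simp
    · rw [if_neg h, if_neg (fun hc => h (hgij.1 hc))]
      simp
  refine ⟨n, sv, a, b, haon, hbon, hsvpos, ?_⟩
  ext v
  rw [hxv v]
  rw [ContinuousLinearMap.sum_apply]
  have hsum1 : ∑ j : Fin d, (inner ℂ ((E j : W) : H) v : ℂ) • x ((E j : W) : H)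
      = ∑ j ∈ J, (inner ℂ ((E j : W) : H) v : ℂ) • x ((E j : W) : H) := by
    symm
    apply Finset.sum_subset (Finset.subset_univ J)
    intro j _ hj
    rw [hJ, Finset.mem_filter] at hj
    push_neg at hj
    rw [hj (Finset.mem_univ j)]
    simp
  rw [hsum1]
  rw [← Finset.sum_attach J (fun j => (inner ℂ ((E j : W) : H) v : ℂ) • x ((E j : W) : H)),
    ← Finset.univ_eq_attach, ← Equiv.sum_comp g.toEquiv]
  refine Finset.sum_congr rfl fun i _ => ?_
  have hne : ((sv i : ℝ) : ℂ) ≠ 0 := by simpa using (hsvpos i).ne'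
  have hsb : (sv i : ℂ) • b i = x ((E ((g i : { y // y ∈ J }) : Fin d) : W) : H) := by
    rw [hb, smul_smul, mul_inv_cancel₀ hne, one_smul]
  rw [ContinuousLinearMap.smul_apply, rk_apply, smul_comm, hsb]
  rfl
end SVD
section TrNorm
variable {H : Type} [NormedAddCommGroup H] [InnerProductSpace ℂ H] [CompleteSpace H]

lemma sum_smul_rk_collapse {d : ℕ} (c e : Fin d → ℂ) (p r : Fin d → H) {q : Fin d → H}
    (hq : Orthonormal ℂ q) :
    (∑ j, c j • rk (p j) (q j)) * (∑ k, e k • rk (q k) (r k))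
      = ∑ j, (c j * e j) • rk (p j) (r j) := by
  classical
  rw [Finset.sum_mul_sum]
  have : ∀ j k, (c j • rk (p j) (q j)) * (e k • rk (q k) (r k))
      = (c j * e k) • ((inner ℂ (q j) (q k) : ℂ) • rk (p j) (r k)) := by
    intro j k
    rw [smul_mul_smul_comm, rk_comp]
  simp only [this, orthonormal_iff_ite.mp hq]
  simp [ite_smul]

lemma absOp_rep {n : ℕ} (s : Fin n → ℝ) (hs : ∀ i, 0 ≤ s i)
    {a b : Fin n → H} (ha : Orthonormal ℂ a) (hb : Orthonormal ℂ b)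
    {x : H →L[ℂ] H} (hrep : x = ∑ i, (s i : ℂ) • rk (b i) (a i)) :
    absOp x = ∑ i, (s i : ℂ) • rk (a i) (a i) := by
  set A : H →L[ℂ] H := ∑ i, (s i : ℂ) • rk (a i) (a i) with hA
  have hstarx : star x = ∑ i, (s i : ℂ) • rk (a i) (b i) := by
    rw [hrep, star_sum]
    refine Finset.sum_congr rfl fun i _ => ?_
    rw [star_smul, star_rk]
    simp [Complex.conj_ofReal]
  have hxx : star x * x = A * A := by
    rw [hstarx, hrep, sum_smul_rk_collapse _ _ _ _ hb, hA,
      sum_smul_rk_collapse _ _ _ _ ha]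
  have hA0 : (0 : H →L[ℂ] H) ≤ A := by
    set C : H →L[ℂ] H := ∑ i, ((Real.sqrt (s i) : ℂ)) • rk (a i) (a i) with hC
    have hCstar : star C = C := by
      rw [hC, star_sum]
      refine Finset.sum_congr rfl fun i _ => ?_
      rw [star_smul, star_rk]
      simp [Complex.conj_ofReal]
    have hCC : star C * C = A := by
      rw [hCstar, hC, sum_smul_rk_collapse _ _ _ _ ha, hA]
      refine Finset.sum_congr rfl fun i _ => ?_
      congr 1
      rw [← Complex.ofReal_mul, Real.mul_self_sqrt (hs i)]
    rw [← hCC]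
    exact star_mul_self_nonneg C
  rw [absOp, hxx, CFC.sqrt_mul_self A hA0]

lemma trNorm_rep (ξ : HilbertBasis ℕ ℂ H) {n : ℕ} (s : Fin n → ℝ) (hs : ∀ i, 0 ≤ s i)
    {a b : Fin n → H} (ha : Orthonormal ℂ a) (hb : Orthonormal ℂ b)
    {x : H →L[ℂ] H} (hrep : x = ∑ i, (s i : ℂ) • rk (b i) (a i)) :
    trNorm ξ x = ∑ i, s i := by
  have hAbs := absOp_rep s hs ha hb hrep
  have hpoint : ∀ k : ℕ, (inner ℂ (ξ k) (absOp x (ξ k)) : ℂ).re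
      = ∑ i, s i * ((inner ℂ (a i) (ξ k) : ℂ) * (starRingEnd ℂ) (inner ℂ (a i) (ξ k) : ℂ)).re := by
    intro k
    rw [hAbs, ContinuousLinearMap.sum_apply, inner_sum]
    rw [Complex.re_sum]
    refine Finset.sum_congr rfl fun i _ => ?_
    rw [ContinuousLinearMap.smul_apply, rk_apply, inner_smul_right, inner_smul_right]
    rw [← inner_conj_symm (ξ k) (a i)]
    have : ((s i : ℂ) * ((inner ℂ (a i) (ξ k) : ℂ) *
        (starRingEnd ℂ) (inner ℂ (a i) (ξ k) : ℂ))).re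
        = s i * ((inner ℂ (a i) (ξ k) : ℂ) * (starRingEnd ℂ) (inner ℂ (a i) (ξ k) : ℂ)).re := by
      rw [Complex.re_ofReal_mul]
    rw [← this]
  have hsummand : ∀ i : Fin n, HasSum
      (fun k : ℕ => s i * ((inner ℂ (a i) (ξ k) : ℂ) * (starRingEnd ℂ) (inner ℂ (a i) (ξ k) : ℂ)).re)
      (s i) := by
    intro i
    have h1 : HasSum (fun k : ℕ => (inner ℂ (a i) (ξ k) : ℂ) * (inner ℂ (ξ k) (a i) : ℂ))
        (inner ℂ (a i) (a i) : ℂ) := ξ.hasSum_inner_mul_inner (a i) (a i)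
    have h2 : HasSum
        (fun k : ℕ => ((inner ℂ (a i) (ξ k) : ℂ) * (inner ℂ (ξ k) (a i) : ℂ)).re)
        ((inner ℂ (a i) (a i) : ℂ)).re := Complex.hasSum_re h1
    have h3 : (inner ℂ (a i) (a i) : ℂ).re = 1 := by
      rw [orthonormal_iff_ite.mp ha i i]
      simp
    rw [h3] at h2
    have h4 : (fun k : ℕ => ((inner ℂ (a i) (ξ k) : ℂ) * (inner ℂ (ξ k) (a i) : ℂ)).re)
        = fun k : ℕ => ((inner ℂ (a i) (ξ k) : ℂ) * (starRingEnd ℂ) (inner ℂ (a i) (ξ k) : ℂ)).re := by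
      funext k
      rw [← inner_conj_symm (ξ k) (a i)]
    rw [h4] at h2
    simpa using h2.mul_left (s i)
  have htot : HasSum (fun k : ℕ => (inner ℂ (ξ k) (absOp x (ξ k)) : ℂ).re) (∑ i, s i) := by
    have := hasSum_sum (f := fun (i : Fin n) (k : ℕ) =>
      s i * ((inner ℂ (a i) (ξ k) : ℂ) * (starRingEnd ℂ) (inner ℂ (a i) (ξ k) : ℂ)).re)
      (s := Finset.univ) (a := fun i => s i) (fun i _ => hsummand i)
    have heq : (fun k : ℕ => (inner ℂ (ξ k) (absOp x (ξ k)) : ℂ).re)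
        = fun k : ℕ => ∑ i, s i * ((inner ℂ (a i) (ξ k) : ℂ) *
            (starRingEnd ℂ) (inner ℂ (a i) (ξ k) : ℂ)).re := funext hpoint
    rw [heq]
    exact this
  rw [trNorm]
  exact htot.tsum_eq

end TrNorm
section Bounds
variable {H : Type} [NormedAddCommGroup H] [InnerProductSpace ℂ H] [CompleteSpace H]
variable (ξ : HilbertBasis ℕ ℂ H) (Φ : (H →L[ℂ] H) → ℝ)

lemma orthonormal_single {v : H} (hv : ‖v‖ = 1) : Orthonormal ℂ (fun _ : Fin 1 => v) := by
  rw [orthonormal_iff_ite]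
  intro i j
  rw [if_pos (Subsingleton.elim i j)]
  rw [inner_self_eq_norm_sq_to_K, hv]
  norm_num

lemma phi_upper
    (hadd : ∀ x y, FiniteRankOp x → FiniteRankOp y → Φ (x + y) ≤ Φ x + Φ y)
    (hsmul : ∀ (c : ℂ) x, FiniteRankOp x → Φ (c • x) = ‖c‖ * Φ x)
    (hunitary : ∀ u v x, u ∈ unitary (H →L[ℂ] H) → v ∈ unitary (H →L[ℂ] H) →
      FiniteRankOp x → Φ (u * x * v) = Φ x)
    {x : H →L[ℂ] H} (hx : FiniteRankOp x) :
    Φ x ≤ Φ (pfin ξ (Finset.range 1)) * trNorm ξ x := by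
  obtain ⟨n, s, a, b, ha, hb, hspos, hrep⟩ := svd hx
  have htr : trNorm ξ x = ∑ i, s i := trNorm_rep ξ s (fun i => (hspos i).le) ha hb hrep
  have hone : ∀ i, Φ (rk (b i) (a i)) = Φ (pfin ξ (Finset.range 1)) := by
    intro i
    have h1 := phi_rep ξ Φ hunitary (orthonormal_single (ha.1 i)) (orthonormal_single (hb.1 i))
    rw [Fin.sum_univ_one] at h1
    exact h1
  calc Φ x = Φ (∑ i, (s i : ℂ) • rk (b i) (a i)) := by rw [hrep]
    _ ≤ ∑ i, Φ ((s i : ℂ) • rk (b i) (a i)) :=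
        phi_sum_le Φ (phi_zero Φ hsmul) hadd _ _
          (fun i _ => (finiteRankOp_rk _ _).smul _)
    _ = ∑ i, s i * Φ (pfin ξ (Finset.range 1)) := by
        refine Finset.sum_congr rfl fun i _ => ?_
        rw [hsmul _ _ (finiteRankOp_rk _ _), hone i]
        simp [abs_of_nonneg (hspos i).le]
    _ = Φ (pfin ξ (Finset.range 1)) * ∑ i, s i := by
        rw [Finset.mul_sum]
        exact Finset.sum_congr rfl fun i _ => mul_comm _ _
    _ = Φ (pfin ξ (Finset.range 1)) * trNorm ξ x := by rw [htr]

lemma phi_lower (ε : ℝ) (hε : 0 < ε)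
    (hadd : ∀ x y, FiniteRankOp x → FiniteRankOp y → Φ (x + y) ≤ Φ x + Φ y)
    (hsmul : ∀ (c : ℂ) x, FiniteRankOp x → Φ (c • x) = ‖c‖ * Φ x)
    (hunitary : ∀ u v x, u ∈ unitary (H →L[ℂ] H) → v ∈ unitary (H →L[ℂ] H) →
      FiniteRankOp x → Φ (u * x * v) = Φ x)
    (hbound : ∀ n : ℕ, 1 ≤ n → (ε / 2) * n ≤ Φ (pfin ξ (Finset.range n)))
    {x : H →L[ℂ] H} (hx : FiniteRankOp x) :
    (ε / 2) * trNorm ξ x ≤ Φ x := by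
  classical
  obtain ⟨n, s, a, b, ha, hb, hspos, hrep⟩ := svd hx
  have htr : trNorm ξ x = ∑ i, s i := trNorm_rep ξ s (fun i => (hspos i).le) ha hb hrep
  rcases Nat.eq_zero_or_pos n with hn0 | hn1
  · subst hn0
    have hx0 : x = 0 := by rw [hrep]; simp
    have htr0 : trNorm ξ x = 0 := by rw [htr]; simp
    rw [htr0, hx0, phi_zero Φ hsmul]
    simp
  · -- permutation averaging
    haveI : NeZero n := ⟨hn1.ne'⟩
    set σ : Fin n → (Fin n ≃ Fin n) := fun k => Equiv.addLeft k with hσ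
    have hknu : ∀ k : Fin n, ∃ u w : H →L[ℂ] H, u ∈ unitary (H →L[ℂ] H) ∧
        w ∈ unitary (H →L[ℂ] H) ∧
        u * x * star w = ∑ i, (s i : ℂ) • rk (b (σ k i)) (a (σ k i)) := by
      intro k
      obtain ⟨u, hu, hub⟩ := unitary_map hb (hb.comp (σ k) (σ k).injective)
      obtain ⟨w, hw, hwa⟩ := unitary_map ha (ha.comp (σ k) (σ k).injective)
      refine ⟨u, w, hu, hw, ?_⟩
      rw [hrep, Finset.mul_sum, Finset.sum_mul]
      refine Finset.sum_congr rfl fun i _ => ?_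
      rw [mul_smul_comm, smul_mul_assoc, comp_rk, rk_comp_star, hub i, hwa i]
      rfl
    choose uu ww huu hww hcomp using hknu
    set y : Fin n → (H →L[ℂ] H) := fun k => uu k * x * star (ww k) with hy
    have hyfr : ∀ k, FiniteRankOp (y k) := fun k => (hx.mul_left _).mul_right _
    have hyΦ : ∀ k, Φ (y k) = Φ x := fun k =>
      hunitary _ _ _ (huu k) (Unitary.star_mem (hww k)) hx
    have hS : (∑ k, y k) = ((∑ i, s i : ℝ) : ℂ) • ∑ j, rk (b j) (a j) := by
      rw [hy]
      simp only []
      calc (∑ k, uu k * x * star (ww k))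
          = ∑ k, ∑ i, (s i : ℂ) • rk (b (σ k i)) (a (σ k i)) := by
            exact Finset.sum_congr rfl fun k _ => hcomp k
        _ = ∑ k, ∑ j, (s ((σ k).symm j) : ℂ) • rk (b j) (a j) := by
            refine Finset.sum_congr rfl fun k _ => ?_
            rw [← Equiv.sum_comp (σ k) (fun j => (s ((σ k).symm j) : ℂ) • rk (b j) (a j))]
            simp
        _ = ∑ j, ∑ k, (s ((σ k).symm j) : ℂ) • rk (b j) (a j) := Finset.sum_comm
        _ = ∑ j, ((∑ i, s i : ℝ) : ℂ) • rk (b j) (a j) := by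
            refine Finset.sum_congr rfl fun j _ => ?_
            rw [← Finset.sum_smul]
            congr 1
            rw [show (∑ k, ((s ((σ k).symm j) : ℝ) : ℂ)) = ((∑ k, s ((σ k).symm j) : ℝ) : ℂ)
              by push_cast; ring]
            congr 1
            have : (fun k => s ((σ k).symm j)) = fun k => s ((Equiv.subLeft j) k) := by
              funext k
              congr 1
              rw [hσ]
              simp [Equiv.subLeft, Equiv.addLeft, sub_eq_neg_add]
            rw [this]
            exact Equiv.sum_comp (Equiv.subLeft j) s
        _ = ((∑ i, s i : ℝ) : ℂ) • ∑ j, rk (b j) (a j) := by rw [Finset.smul_sum]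
    have hΦS_le : Φ (∑ k, y k) ≤ n * Φ x := by
      calc Φ (∑ k, y k) ≤ ∑ k, Φ (y k) :=
            phi_sum_le Φ (phi_zero Φ hsmul) hadd _ _ (fun k _ => hyfr k)
        _ = n * Φ x := by
            rw [Finset.sum_congr rfl fun k _ => hyΦ k]
            simp [Finset.sum_const]
    have hΦS_eq : Φ (∑ k, y k) = (∑ i, s i) * Φ (pfin ξ (Finset.range n)) := by
      rw [hS, hsmul _ _ (FiniteRankOp.sum _ _ fun j _ => finiteRankOp_rk _ _)]
      have hssum : (0:ℝ) ≤ ∑ i, s i := Finset.sum_nonneg fun i _ => (hspos i).le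
      rw [Complex.norm_real, Real.norm_of_nonneg hssum]
      congr 1
      have hones : ∀ i : Fin n, (1:ℂ) • rk (b i) (a i) = rk (b i) (a i) := fun i => one_smul _ _
      exact phi_rep ξ Φ hunitary ha hb
    have hn1' : (1:ℝ) ≤ (n:ℝ) := by exact_mod_cast hn1
    have hnpos : (0:ℝ) < n := by linarith
    have hb1 := hbound n hn1
    have hssum : (0:ℝ) ≤ ∑ i, s i := Finset.sum_nonneg fun i _ => (hspos i).le
    -- (∑ s) * (ε/2) * n ≤ (∑ s) * Φ(p_n) = Φ(S) ≤ n * Φ x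
    have hkey : (∑ i, s i) * ((ε / 2) * n) ≤ n * Φ x := by
      calc (∑ i, s i) * ((ε / 2) * n) ≤ (∑ i, s i) * Φ (pfin ξ (Finset.range n)) :=
            mul_le_mul_of_nonneg_left hb1 hssum
        _ = Φ (∑ k, y k) := hΦS_eq.symm
        _ ≤ n * Φ x := hΦS_le
    rw [htr]
    nlinarith [hkey, hnpos]

end Bounds

/-- Kuroda criterion: a unitarily invariant norm `Φ` on the finite-rank
operators of `B(H)` satisfies `Φ(e)/Tr(e) → 0` (over finite-rank projections `e`, as
`Tr(e) = rank e → ∞`) if and only if `Φ` is not equivalent to the trace norm on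
finite-rank operators. -/
theorem kuroda_criterion
    {H : Type} [NormedAddCommGroup H] [InnerProductSpace ℂ H] [CompleteSpace H]
    [TopologicalSpace.SeparableSpace H] (hinf : ¬ FiniteDimensional ℂ H)
    (ξ : HilbertBasis ℕ ℂ H)
    (Φ : (H →L[ℂ] H) → ℝ)
    (hnonneg : ∀ x, 0 ≤ Φ x)
    (hzero : ∀ x, FiniteRankOp x → Φ x = 0 → x = 0)
    (hadd : ∀ x y, FiniteRankOp x → FiniteRankOp y → Φ (x + y) ≤ Φ x + Φ y)
    (hsmul : ∀ (c : ℂ) x, FiniteRankOp x → Φ (c • x) = ‖c‖ * Φ x)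
    (hunitary : ∀ u v x, u ∈ unitary (H →L[ℂ] H) → v ∈ unitary (H →L[ℂ] H) →
      FiniteRankOp x → Φ (u * x * v) = Φ x) :
    (∀ ε : ℝ, 0 < ε → ∃ N : ℕ, ∀ e : H →L[ℂ] H, IsProjection e → FiniteRankOp e →
        N ≤ rankOp e → Φ e ≤ ε * rankOp e)
    ↔ ¬ (∃ c C : ℝ, 0 < c ∧ 0 < C ∧ ∀ x, FiniteRankOp x →
        c * trNorm ξ x ≤ Φ x ∧ Φ x ≤ C * trNorm ξ x) := by
  constructor
  · -- the limit condition implies non-equivalence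
    intro hlim
    rintro ⟨c, C, hc, hC, hequiv⟩
    obtain ⟨N, hN⟩ := hlim (c / 2) (by positivity)
    set n := max N 1 with hn
    set e := pfin ξ (Finset.range n) with he
    have hfr : FiniteRankOp e := finiteRankOp_pfin ξ (Finset.range n)
    have hrank : rankOp e = n := by rw [he, rankOp_pfin, Finset.card_range]
    have htre : trNorm ξ e = n := by
      have hrep : e = ∑ i : Fin n, (((1 : ℝ)) : ℂ) • rk (ξ (i : ℕ)) (ξ (i : ℕ)) := by
        rw [he, pfin_range_eq_sum_fin]
        simp
      have h := trNorm_rep ξ (fun _ : Fin n => (1 : ℝ)) (fun _ => zero_le_one)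
        (orthonormal_xifam ξ n) (orthonormal_xifam ξ n) hrep
      rw [h]
      simp
    have h1 := (hequiv e hfr).1
    have h2 := hN e (isProjection_pfin ξ _) hfr (by rw [hrank]; exact le_max_left _ _)
    rw [htre] at h1
    rw [hrank] at h2
    have hn1 : (1 : ℝ) ≤ (n : ℝ) := by
      have : 1 ≤ n := le_max_right N 1
      exact_mod_cast this
    nlinarith [h1, h2, hc, hn1]
  · -- non-equivalence implies the limit condition
    intro hne
    by_contra hnl
    apply hne
    push_neg at hnl
    obtain ⟨ε, hε, hbig⟩ := hnl
    set φf : ℕ → ℝ := fun m => Φ (pfin ξ (Finset.range m)) with hφf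
    have hmono : ∀ {p q : ℕ}, p ≤ q → φf p ≤ φf q :=
      fun h => phi_mono ξ Φ hadd hsmul hunitary h
    have h0 : φf 0 = 0 := by
      have hp0 : pfin ξ (Finset.range 0) = 0 := by rw [pfin]; simp
      rw [hφf]
      simp only
      rw [hp0]
      exact phi_zero Φ hsmul
    have hsubadd : ∀ k m, φf (k + m) ≤ φf k + φf m :=
      fun k m => phi_range_add ξ Φ hadd hunitary k m
    have hbig' : ∀ N : ℕ, ∃ m : ℕ, N ≤ m ∧ ε * m ≤ φf m := by
      intro N
      obtain ⟨e, hproj, hfr, hrk, hΦe⟩ := hbig N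
      refine ⟨rankOp e, hrk, ?_⟩
      obtain ⟨bb, hbb, hrepe⟩ := proj_rep hproj hfr
      have heq : Φ e = φf (rankOp e) := by
        rw [hφf]
        simp only
        conv_lhs => rw [hrepe]
        exact phi_rep ξ Φ hunitary hbb hbb
      rw [← heq]
      exact le_of_lt hΦe
    have hbnd : ∀ m : ℕ, 1 ≤ m → (ε / 2) * m ≤ φf m :=
      fun m hm => kuroda_arith φf ε hε (fun h => hmono h) h0 hsubadd hbig' hm
    refine ⟨ε / 2, Φ (pfin ξ (Finset.range 1)), by positivity,
      phi_one_pos ξ Φ hnonneg hzero, ?_⟩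
    intro x hx
    exact ⟨phi_lower ξ Φ ε hε hadd hsmul hunitary hbnd hx,
      phi_upper ξ Φ hadd hsmul hunitary hx⟩
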